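/- In the Eisenberg–Noe model with central clearing, suppose x ∈ ℝ^{d+1} is such that the linear program P̃(x) is feasible. Then P̃(x) has an optimal solution p(x) ∈ ℝ^{d+1}_+ that is also a clearing payment vector, i.e., it satisfies p_i(x) = min{ ℓ_{i(d+1)} + ℓ_{i0} , x_i + p_{d+1}(x) ℓ_{(d+1)i} / Σ_{j=1}^d ℓ_{(d+1)j} } for i ∈ {1,…,d} and p_{d+1}(x) = min{ Σ_{i=1}^d ℓ_{(d+1)i} , x_{d+1} + Σ_{i=1}^d p_i(x) ℓ_{i(d+1)} / (ℓ_{i(d+1)} + ℓ_{i0}) }. Moreover, the optimal value of P̃(x) equals the objective value Σ_{i=1}^d ( ℓ_{i0}/(ℓ_{i0} + ℓ_{i(d+1)}) ) p_i(x) at any such solution. -/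
import Mathlib


open scoped ENNReal

noncomputable section

namespace EisenbergNoeCCP

/-- Net interbank liability `∑_{j=1}^d ℓ_{ij} − ∑_{j=1}^d ℓ_{ji}` of institution `i`
(institutions are the nodes `1,…,d`, encoded as `i.succ` for `i : Fin d`; node `0` is
society). -/
def net {d : ℕ} (ℓ : Fin (d + 1) → Fin (d + 1) → ℝ) (i : Fin d) : ℝ :=
  ∑ j : Fin d, ℓ i.succ j.succ - ∑ j : Fin d, ℓ j.succ i.succ

/-- Liability `ℓ_{i(d+1)} = (∑ⱼ ℓ_{ij} − ∑ⱼ ℓ_{ji})⁺` of institution `i` to the CCP. -/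
def toCCP {d : ℕ} (ℓ : Fin (d + 1) → Fin (d + 1) → ℝ) (i : Fin d) : ℝ :=
  max (net ℓ i) 0

/-- Liability `ℓ_{(d+1)i} = (∑ⱼ ℓ_{ij} − ∑ⱼ ℓ_{ji})⁻` of the CCP to institution `i`. -/
def fromCCP {d : ℕ} (ℓ : Fin (d + 1) → Fin (d + 1) → ℝ) (i : Fin d) : ℝ :=
  max (-net ℓ i) 0

/-- Feasibility for the linear program `P̃(x)` of the Eisenberg–Noe model with central
clearing; the state is `(x, xC) ∈ ℝ^{d+1}` and the payment vector is `(p, pC)`,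
where the last coordinate belongs to the CCP (node `d+1`). -/
def Feasible {d : ℕ} (ℓ : Fin (d + 1) → Fin (d + 1) → ℝ) (x : Fin d → ℝ) (xC : ℝ)
    (p : Fin d → ℝ) (pC : ℝ) : Prop :=
  (∀ i, p i ≤ x i + (fromCCP ℓ i / ∑ j, fromCCP ℓ j) * pC) ∧
    pC ≤ xC + ∑ i, (toCCP ℓ i / (toCCP ℓ i + ℓ i.succ 0)) * p i ∧
    (∀ i, 0 ≤ p i ∧ p i ≤ toCCP ℓ i + ℓ i.succ 0) ∧
    0 ≤ pC ∧ pC ≤ ∑ i, fromCCP ℓ i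

/-- The objective `∑_{i=1}^d (ℓ_{i0}/(ℓ_{i0} + ℓ_{i(d+1)})) pᵢ` of `P̃(x)`. -/
def obj {d : ℕ} (ℓ : Fin (d + 1) → Fin (d + 1) → ℝ) (p : Fin d → ℝ) : ℝ :=
  ∑ i, (ℓ i.succ 0 / (ℓ i.succ 0 + toCCP ℓ i)) * p i

/-- The clearing fixed-point equations of the Eisenberg–Noe model with central
clearing. -/
def Clearing {d : ℕ} (ℓ : Fin (d + 1) → Fin (d + 1) → ℝ) (x : Fin d → ℝ) (xC : ℝ)
    (p : Fin d → ℝ) (pC : ℝ) : Prop :=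
  (∀ i, p i = min (toCCP ℓ i + ℓ i.succ 0)
      (x i + pC * (fromCCP ℓ i / ∑ j, fromCCP ℓ j))) ∧
    pC = min (∑ i, fromCCP ℓ i)
      (xC + ∑ i, p i * (toCCP ℓ i / (toCCP ℓ i + ℓ i.succ 0)))

/-- In the Eisenberg–Noe model with central clearing, if `P̃(x)` is
feasible then it has an optimal solution which is also a clearing payment vector, and
the optimal value of `P̃(x)` equals the objective value at any such solution. -/
theorem ccp_optimal_clearing_exists
    (d : ℕ) (hd : 1 ≤ d) (ℓ : Fin (d + 1) → Fin (d + 1) → ℝ)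
    (hℓnn : ∀ i j, 0 ≤ ℓ i j)
    (hsoc : ∀ i : Fin d, ℓ 0 i.succ = 0)
    (hto0 : ∀ i : Fin d, 0 < ℓ i.succ 0)
    (hself : ∀ i, ℓ i i = 0)
    (hCCP : 0 < ∑ j, fromCCP ℓ j)
    (x : Fin d → ℝ) (xC : ℝ)
    (hfeas : ∃ (p : Fin d → ℝ) (pC : ℝ), Feasible ℓ x xC p pC) :
    (∃ (p : Fin d → ℝ) (pC : ℝ), Feasible ℓ x xC p pC ∧
      (∀ (q : Fin d → ℝ) (qC : ℝ), Feasible ℓ x xC q qC → obj ℓ q ≤ obj ℓ p) ∧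
      Clearing ℓ x xC p pC) ∧
    (∀ (p : Fin d → ℝ) (pC : ℝ), Feasible ℓ x xC p pC →
      (∀ (q : Fin d → ℝ) (qC : ℝ), Feasible ℓ x xC q qC → obj ℓ q ≤ obj ℓ p) →
      Clearing ℓ x xC p pC →
      (⨆ (q : Fin d → ℝ) (qC : ℝ) (_ : Feasible ℓ x xC q qC),
          ((obj ℓ q : ℝ) : EReal)) = ((obj ℓ p : ℝ) : EReal)) := by
  classical
  obtain ⟨q, qC, hq⟩ := hfeas
  have hw0 : ∀ i : Fin d, 0 ≤ fromCCP ℓ i / ∑ j, fromCCP ℓ j := fun i =>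
    div_nonneg (le_max_right _ _) hCCP.le
  have hcap0 : ∀ i : Fin d, 0 ≤ toCCP ℓ i := fun i => le_max_right _ _
  have hden : ∀ i : Fin d, 0 < toCCP ℓ i + ℓ i.succ 0 := fun i =>
    add_pos_of_nonneg_of_pos (hcap0 i) (hto0 i)
  have hc0 : ∀ i : Fin d, 0 ≤ toCCP ℓ i / (toCCP ℓ i + ℓ i.succ 0) := fun i =>
    div_nonneg (hcap0 i) (hden i).le
  have hobjc : ∀ i : Fin d, 0 ≤ ℓ i.succ 0 / (ℓ i.succ 0 + toCCP ℓ i) := fun i =>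
    div_nonneg (hto0 i).le (by have := hden i; linarith)
  set Si : Fin d → Set ℝ := fun i => {t | ∃ p pC, Feasible ℓ x xC p pC ∧ t = p i} with hSi
  set SC : Set ℝ := {t | ∃ p pC, Feasible ℓ x xC p pC ∧ t = pC} with hSC
  have hSine : ∀ i, (Si i).Nonempty := fun i => ⟨q i, q, qC, hq, rfl⟩
  have hSCne : SC.Nonempty := ⟨qC, q, qC, hq, rfl⟩
  have hSibdd : ∀ i, BddAbove (Si i) := by
    intro i
    refine ⟨toCCP ℓ i + ℓ i.succ 0, ?_⟩
    rintro t ⟨p, pC, hp, rfl⟩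
    exact (hp.2.2.1 i).2
  have hSCbdd : BddAbove SC := by
    refine ⟨∑ i, fromCCP ℓ i, ?_⟩
    rintro t ⟨p, pC, hp, rfl⟩
    exact hp.2.2.2.2
  set P : Fin d → ℝ := fun i => sSup (Si i) with hP
  set PC : ℝ := sSup SC with hPCdef
  have hle : ∀ p pC, Feasible ℓ x xC p pC → (∀ i, p i ≤ P i) ∧ pC ≤ PC := by
    intro p pC hp
    exact ⟨fun i => le_csSup (hSibdd i) ⟨p, pC, hp, rfl⟩, le_csSup hSCbdd ⟨p, pC, hp, rfl⟩⟩
  have hPub : ∀ i, P i ≤ toCCP ℓ i + ℓ i.succ 0 := by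
    intro i
    apply csSup_le (hSine i)
    rintro t ⟨p, pC, hp, rfl⟩
    exact (hp.2.2.1 i).2
  have hPlb : ∀ i, 0 ≤ P i := fun i => ((hq.2.2.1 i).1).trans ((hle q qC hq).1 i)
  have hPCub : PC ≤ ∑ i, fromCCP ℓ i := by
    apply csSup_le hSCne
    rintro t ⟨p, pC, hp, rfl⟩
    exact hp.2.2.2.2
  have hPClb : 0 ≤ PC := (hq.2.2.2.1).trans ((hle q qC hq).2)
  have hPfeas1 : ∀ i, P i ≤ x i + (fromCCP ℓ i / ∑ j, fromCCP ℓ j) * PC := by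
    intro i
    apply csSup_le (hSine i)
    rintro t ⟨p, pC, hp, rfl⟩
    have h1 := hp.1 i
    have h2 := mul_le_mul_of_nonneg_left ((hle p pC hp).2) (hw0 i)
    linarith
  have hPfeas2 : PC ≤ xC + ∑ i, (toCCP ℓ i / (toCCP ℓ i + ℓ i.succ 0)) * P i := by
    apply csSup_le hSCne
    rintro t ⟨p, pC, hp, rfl⟩
    have h1 := hp.2.1
    have h2 : ∑ i, (toCCP ℓ i / (toCCP ℓ i + ℓ i.succ 0)) * p i ≤
        ∑ i, (toCCP ℓ i / (toCCP ℓ i + ℓ i.succ 0)) * P i :=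
      Finset.sum_le_sum fun i _ =>
        mul_le_mul_of_nonneg_left ((hle p t hp).1 i) (hc0 i)
    linarith
  have hPfeasible : Feasible ℓ x xC P PC :=
    ⟨hPfeas1, hPfeas2, fun i => ⟨hPlb i, hPub i⟩, hPClb, hPCub⟩
  -- the image under the monotone map
  set P' : Fin d → ℝ := fun i =>
    min (toCCP ℓ i + ℓ i.succ 0) (x i + (fromCCP ℓ i / ∑ j, fromCCP ℓ j) * PC) with hP'
  set PC' : ℝ := min (∑ i, fromCCP ℓ i)
    (xC + ∑ i, (toCCP ℓ i / (toCCP ℓ i + ℓ i.succ 0)) * P i) with hPC'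
  have hPleP' : ∀ i, P i ≤ P' i := fun i => le_min (hPub i) (hPfeas1 i)
  have hPCle : PC ≤ PC' := le_min hPCub hPfeas2
  have hP'feas : Feasible ℓ x xC P' PC' := by
    refine ⟨?_, ?_, ?_, hPClb.trans hPCle, min_le_left _ _⟩
    · intro i
      have h1 : P' i ≤ x i + (fromCCP ℓ i / ∑ j, fromCCP ℓ j) * PC := min_le_right _ _
      have h2 := mul_le_mul_of_nonneg_left hPCle (hw0 i)
      linarith
    · have h1 : PC' ≤ xC + ∑ i, (toCCP ℓ i / (toCCP ℓ i + ℓ i.succ 0)) * P i :=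
        min_le_right _ _
      have h2 : ∑ i, (toCCP ℓ i / (toCCP ℓ i + ℓ i.succ 0)) * P i ≤
          ∑ i, (toCCP ℓ i / (toCCP ℓ i + ℓ i.succ 0)) * P' i :=
        Finset.sum_le_sum fun i _ => mul_le_mul_of_nonneg_left (hPleP' i) (hc0 i)
      linarith
    · exact fun i => ⟨(hPlb i).trans (hPleP' i), min_le_left _ _⟩
  have hPeq : ∀ i, P i = P' i := fun i =>
    le_antisymm (hPleP' i) ((hle P' PC' hP'feas).1 i)
  have hPCeq : PC = PC' := le_antisymm hPCle ((hle P' PC' hP'feas).2)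
  have hclear : Clearing ℓ x xC P PC := by
    constructor
    · intro i
      rw [hPeq i]
      simp [hP', mul_comm]
    · rw [hPCeq]
      simp [hPC', mul_comm]
  have hopt : ∀ (r : Fin d → ℝ) (rC : ℝ), Feasible ℓ x xC r rC → obj ℓ r ≤ obj ℓ P := by
    intro r rC hr
    exact Finset.sum_le_sum fun i _ =>
      mul_le_mul_of_nonneg_left ((hle r rC hr).1 i) (hobjc i)
  refine ⟨⟨P, PC, hPfeasible, hopt, hclear⟩, ?_⟩
  intro p pC hp hoptp _
  apply le_antisymm
  · refine iSup_le fun r => iSup_le fun rC => iSup_le fun hr => ?_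
    exact_mod_cast hoptp r rC hr
  · exact le_iSup_of_le p (le_iSup_of_le pC (le_iSup_of_le hp le_rfl))

end EisenbergNoeCCP
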